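/- There exists an AP domain which does not satisfy the PC condition. -/

import Mathlib

/-- There exists an AP domain (every irreducible element is prime)
which does not satisfy the PC condition (every proper two-generated ideal is contained
in a proper principal ideal). -/
theorem exists_ap_not_pc : ∃ (R : Type) (_ : CommRing R) (_ : IsDomain R),
    (∀ p : R, Irreducible p → Prime p) ∧
    ¬(∀ a b : R, Ideal.span {a, b} ≠ (⊤ : Ideal R) →
      ∃ c : R, Ideal.span {a, b} ≤ Ideal.span {c} ∧ Ideal.span ({c} : Set R) ≠ ⊤) := by
  refine ⟨Polynomial ℤ, inferInstance, inferInstance,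
    fun p hp => UniqueFactorizationMonoid.irreducible_iff_prime.mp hp, ?_⟩
  intro h
  have hproper : Ideal.span ({2, Polynomial.X} : Set (Polynomial ℤ)) ≠ ⊤ := by
    intro ht
    have h1 : (1 : Polynomial ℤ) ∈ Ideal.span ({2, Polynomial.X} : Set (Polynomial ℤ)) := by
      rw [ht]; trivial
    rw [Ideal.mem_span_pair] at h1
    obtain ⟨u, v, huv⟩ := h1
    have := congrArg ((Int.castRingHom (ZMod 2)).comp (Polynomial.evalRingHom 0)) huv
    simp at this
    exact absurd this.2 (by decide)
  obtain ⟨c, hle, hne⟩ := h 2 Polynomial.X hproper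
  have hc2 : c ∣ 2 := by
    have : (2 : Polynomial ℤ) ∈ Ideal.span ({c} : Set (Polynomial ℤ)) :=
      hle (Ideal.subset_span (by simp))
    rwa [Ideal.mem_span_singleton] at this
  have hcX : c ∣ Polynomial.X := by
    have : (Polynomial.X : Polynomial ℤ) ∈ Ideal.span ({c} : Set (Polynomial ℤ)) :=
      hle (Ideal.subset_span (by simp))
    rwa [Ideal.mem_span_singleton] at this
  have hXirr : Irreducible (Polynomial.X : Polynomial ℤ) := Polynomial.irreducible_X
  obtain ⟨q, hq⟩ := hcX
  rcases hXirr.isUnit_or_isUnit hq with hu | hu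
  · exact hne (Ideal.span_singleton_eq_top.mpr hu)
  · -- c is associated to X, so X ∣ 2, contradiction
    have hXc : (Polynomial.X : Polynomial ℤ) ∣ c := ⟨↑hu.unit⁻¹, by
      rw [hq, mul_assoc, IsUnit.mul_val_inv, mul_one]⟩
    have hX2 : (Polynomial.X : Polynomial ℤ) ∣ 2 := hXc.trans hc2
    obtain ⟨r, hr⟩ := hX2
    have := congrArg (Polynomial.evalRingHom 0) hr
    simp at this
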